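/- Let (μ_i)_{i∈I} be positive reals with μ_i ≤ c₁ i^{-1/p} for all i ∈ I ⊆ ℕ₊, where c₁ > 0 and 0 < p < 1. Then there exists a constant D > 0 such that for all λ > 0, the effective dimension N(λ) := Σ_i μ_i/(μ_i + λ) satisfies N(λ) ≤ D λ^{-p}. -/

import Mathlib

open Real

/-- Convexity/MVT step: for `s > 1`, `a > 0`,
`(s-1)(a+1)^{-s} ≤ a^{1-s} - (a+1)^{1-s}`. -/
private lemma mvt_step {s a : ℝ} (hs : 1 < s) (ha : 0 < a) :
    (s - 1) * (a + 1) ^ (-s) ≤ a ^ (1 - s) - (a + 1) ^ (1 - s) := by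
  have hab : a < a + 1 := by linarith
  have hcont : ContinuousOn (fun t : ℝ => t ^ (1 - s)) (Set.Icc a (a + 1)) := fun x hx =>
    ((Real.hasDerivAt_rpow_const (p := 1 - s)
      (Or.inl (ha.trans_le hx.1).ne')).continuousAt).continuousWithinAt
  obtain ⟨c, hc, hceq⟩ := exists_hasDerivAt_eq_slope (fun t : ℝ => t ^ (1 - s))
      (fun x => (1 - s) * x ^ (1 - s - 1)) hab hcont
      (fun x hx => Real.hasDerivAt_rpow_const (Or.inl (ha.trans hx.1).ne'))
  have hc0 : 0 < c := ha.trans hc.1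
  have hmono : (a + 1) ^ (-s) ≤ c ^ (-s) :=
    Real.rpow_le_rpow_of_nonpos hc0 hc.2.le (by linarith)
  have hexp : (1 : ℝ) - s - 1 = -s := by ring
  rw [hexp] at hceq
  have hslope : (1 - s) * c ^ (-s) = (a + 1) ^ (1 - s) - a ^ (1 - s) := by
    rw [hceq]; simp
  have h1 : a ^ (1 - s) - (a + 1) ^ (1 - s) = (s - 1) * c ^ (-s) := by linarith
  rw [h1]
  exact mul_le_mul_of_nonneg_left hmono (by linarith)

/-- Tail bound for a `p`-series: `∑_{k≥0} (n+k+1)^{-s} ≤ n^{1-s}/(s-1)` for `s > 1`, `n ≥ 1`. -/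
private lemma tail_sum {s : ℝ} (hs : 1 < s) {n : ℕ} (hn : 1 ≤ n) :
    ∑' k : ℕ, ((n + k + 1 : ℕ) : ℝ) ^ (-s) ≤ (n : ℝ) ^ (1 - s) / (s - 1) := by
  have hs1 : (0 : ℝ) < s - 1 := by linarith
  have hn0 : (0 : ℝ) < (n : ℝ) := by exact_mod_cast hn
  apply Real.tsum_le_of_sum_range_le (fun k => Real.rpow_nonneg (by positivity) _)
  intro m
  have key : ∀ k : ℕ, ((n + k + 1 : ℕ) : ℝ) ^ (-s)
      ≤ (((n + k : ℕ) : ℝ) ^ (1 - s) - ((n + (k + 1) : ℕ) : ℝ) ^ (1 - s)) / (s - 1) := by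
    intro k
    have ha : (0 : ℝ) < (n : ℝ) + (k : ℕ) := by positivity
    have h := mvt_step hs ha
    rw [le_div_iff₀' hs1]
    push_cast
    convert h using 3; rfl; ring
  calc ∑ k ∈ Finset.range m, ((n + k + 1 : ℕ) : ℝ) ^ (-s)
      ≤ ∑ k ∈ Finset.range m,
          ((((n + k : ℕ) : ℝ) ^ (1 - s) - ((n + (k + 1) : ℕ) : ℝ) ^ (1 - s)) / (s - 1)) :=
        Finset.sum_le_sum fun k _ => key k
    _ = (((n + 0 : ℕ) : ℝ) ^ (1 - s) - ((n + m : ℕ) : ℝ) ^ (1 - s)) / (s - 1) := by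
        rw [← Finset.sum_div, Finset.sum_range_sub' (fun k => ((n + k : ℕ) : ℝ) ^ (1 - s))]
    _ ≤ (n : ℝ) ^ (1 - s) / (s - 1) := by
        have h0 : (0 : ℝ) ≤ ((n + m : ℕ) : ℝ) ^ (1 - s) := Real.rpow_nonneg (by positivity) _
        have h1 : ((n + 0 : ℕ) : ℝ) ^ (1 - s) = (n : ℝ) ^ (1 - s) := by norm_num
        rw [h1]
        exact div_le_div_of_nonneg_right (by linarith) hs1.le

/-- Effective-dimension bound under polynomial eigenvalue decay: if `μ_i ≤ c₁ i^{-1/p}`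
with `c₁ > 0` and `0 < p < 1`, then there is `D > 0` with
`N(λ) = Σ_i μ_i/(μ_i+λ) ≤ D λ^{-p}` for all `λ > 0`. -/
theorem stmt6 (μ : ℕ+ → ℝ) (c₁ p : ℝ) (hc : 0 < c₁) (hp0 : 0 < p) (hp1 : p < 1)
    (hpos : ∀ i, 0 < μ i)
    (hdecay : ∀ i : ℕ+, μ i ≤ c₁ * ((i : ℕ) : ℝ) ^ (-(1 / p))) :
    ∃ D > (0 : ℝ), ∀ lam : ℝ, 0 < lam →
      ∑' i : ℕ+, μ i / (μ i + lam) ≤ D * lam ^ (-p) := by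
  set s : ℝ := 1 / p with hsdef
  have hs : 1 < s := (one_lt_div hp0).mpr hp1
  have hps : p * s = 1 := by rw [hsdef]; exact mul_one_div_cancel hp0.ne'
  -- summability facts
  have hNat : Summable (fun n : ℕ => (n : ℝ) ^ (-s)) :=
    Real.summable_nat_rpow.mpr (by linarith)
  have hPNat : Summable (fun i : ℕ+ => ((i : ℕ) : ℝ) ^ (-s)) :=
    hNat.comp_injective (fun a b h => PNat.coe_injective h)
  have hdecay' : ∀ i : ℕ+, μ i ≤ c₁ * ((i : ℕ) : ℝ) ^ (-s) := fun i => hdecay i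
  have hsumμ : Summable μ :=
    Summable.of_nonneg_of_le (fun i => (hpos i).le) hdecay' (hPNat.mul_left c₁)
  set S : ℝ := ∑' i : ℕ+, μ i with hSdef
  have hS0 : 0 ≤ S := tsum_nonneg fun i => (hpos i).le
  have hB : 0 < (2 + p / (1 - p)) * c₁ ^ p + 1 := by
    have h1 : 0 ≤ p / (1 - p) := div_nonneg hp0.le (by linarith)
    have h2 : 0 < c₁ ^ p := Real.rpow_pos_of_pos hc p
    nlinarith
  have hA : 0 ≤ S * c₁ ^ (p - 1) :=
    mul_nonneg hS0 (Real.rpow_pos_of_pos hc _).le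
  refine ⟨S * c₁ ^ (p - 1) + ((2 + p / (1 - p)) * c₁ ^ p + 1), by linarith, ?_⟩
  intro lam hlam
  have hlamp : 0 < lam ^ (-p) := Real.rpow_pos_of_pos hlam _
  have hsumN : Summable (fun i : ℕ+ => μ i / (μ i + lam)) := by
    refine Summable.of_nonneg_of_le
      (fun i => div_nonneg (hpos i).le (by linarith [hpos i])) ?_ (hsumμ.div_const lam)
    intro i
    exact div_le_div_of_nonneg_left (hpos i).le hlam (by linarith [hpos i])
  rcases le_or_gt c₁ lam with hcase | hcase
  · -- large λ: N(λ) ≤ S/λ ≤ S c₁^{p-1} λ^{-p}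
    have h1 : ∑' i : ℕ+, μ i / (μ i + lam) ≤ ∑' i : ℕ+, μ i / lam := by
      refine Summable.tsum_le_tsum ?_ hsumN (hsumμ.div_const lam)
      intro i
      exact div_le_div_of_nonneg_left (hpos i).le hlam (by linarith [hpos i])
    have h2 : ∑' i : ℕ+, μ i / lam = S / lam := tsum_div_const
    have h3 : lam ^ (-(1 : ℝ)) ≤ c₁ ^ (p - 1) * lam ^ (-p) := by
      have hmono : lam ^ (p - 1) ≤ c₁ ^ (p - 1) :=
        Real.rpow_le_rpow_of_nonpos hc hcase (by linarith)
      calc lam ^ (-(1 : ℝ)) = lam ^ (p - 1) * lam ^ (-p) := by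
            rw [← Real.rpow_add hlam]; congr 1; ring
        _ ≤ c₁ ^ (p - 1) * lam ^ (-p) := mul_le_mul_of_nonneg_right hmono hlamp.le
    have h4 : S / lam ≤ S * c₁ ^ (p - 1) * lam ^ (-p) := by
      rw [div_eq_mul_inv, ← Real.rpow_neg_one lam, mul_assoc]
      exact mul_le_mul_of_nonneg_left h3 hS0
    calc ∑' i : ℕ+, μ i / (μ i + lam) ≤ S / lam := h2 ▸ h1
      _ ≤ S * c₁ ^ (p - 1) * lam ^ (-p) := h4
      _ ≤ (S * c₁ ^ (p - 1) + ((2 + p / (1 - p)) * c₁ ^ p + 1)) * lam ^ (-p) := by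
          apply mul_le_mul_of_nonneg_right _ hlamp.le
          linarith
  · -- small λ: split at n₀ = ⌈(c₁/λ)^p⌉
    have hd : (0 : ℝ) < c₁ / lam := div_pos hc hlam
    set T : ℝ := (c₁ / lam) ^ p with hTdef
    have hT1 : 1 < T :=
      (Real.one_lt_rpow_iff_of_pos hd).mpr (Or.inl ⟨(one_lt_div hlam).mpr hcase, hp0⟩)
    have hT0 : 0 < T := by linarith
    set n₀ : ℕ := ⌈T⌉₊ with hn0def
    have hn₀pos : 0 < n₀ := Nat.ceil_pos.mpr hT0
    have hTn : T ≤ (n₀ : ℝ) := Nat.le_ceil T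
    have hn2T : (n₀ : ℝ) ≤ 2 * T := by
      have := Nat.ceil_lt_add_one hT0.le
      linarith
    set np : ℕ+ := ⟨n₀, hn₀pos⟩ with hnpdef
    set F : Finset ℕ+ := Finset.Icc 1 np with hFdef
    have hmem : ∀ x : ℕ+, x ∉ F → n₀ + 1 ≤ (x : ℕ) := by
      intro x hx
      simp only [hFdef, Finset.mem_Icc, not_and, not_le] at hx
      have h2 : np < x := hx x.one_le
      have h3 : (np : ℕ) < (x : ℕ) := (PNat.coe_lt_coe np x).mpr h2
      have h4 : (np : ℕ) = n₀ := rfl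
      omega
    -- head bound
    have hhead : ∑ i ∈ F, μ i / (μ i + lam) ≤ (n₀ : ℝ) := by
      have hcard : F.card = n₀ := by
        rw [hFdef, PNat.card_Icc]; simp [hnpdef]
      calc ∑ i ∈ F, μ i / (μ i + lam) ≤ ∑ i ∈ F, (1 : ℝ) :=
            Finset.sum_le_sum fun i _ =>
              (div_le_one (by linarith [hpos i])).mpr (by linarith [hpos i])
        _ = (F.card : ℝ) := by simp
        _ = (n₀ : ℝ) := by rw [hcard]
    -- tail bound
    have hg : Summable (fun k : ℕ => (c₁ / lam) * ((n₀ + k + 1 : ℕ) : ℝ) ^ (-s)) := by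
      apply Summable.mul_left
      exact hNat.comp_injective (fun a b h => by omega)
    have htail : ∑' i : { x : ℕ+ // x ∉ F }, μ i / (μ i + lam)
        ≤ (c₁ / lam) * ((n₀ : ℝ) ^ (1 - s) / (s - 1)) := by
      have h1 : ∑' i : { x : ℕ+ // x ∉ F }, μ i / (μ i + lam)
          ≤ ∑' k : ℕ, (c₁ / lam) * ((n₀ + k + 1 : ℕ) : ℝ) ^ (-s) := by
        refine Summable.tsum_le_tsum_of_inj (fun b => ((b : ℕ+) : ℕ) - (n₀ + 1)) ?_ ?_ ?_ ?_ hg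
        · intro x y hxy
          have hx := hmem x x.2
          have hy := hmem y y.2
          have hxy' : ((x : ℕ+) : ℕ) - (n₀ + 1) = ((y : ℕ+) : ℕ) - (n₀ + 1) := hxy
          have : ((x : ℕ+) : ℕ) = ((y : ℕ+) : ℕ) := by omega
          exact Subtype.ext (PNat.coe_injective this)
        · intro c _
          positivity
        · intro b
          have hb := hmem b b.2
          have harith : n₀ + (((b : ℕ+) : ℕ) - (n₀ + 1)) + 1 = ((b : ℕ+) : ℕ) := by omega
          have hb0 : 0 < μ (b : ℕ+) := hpos _
          calc μ (b : ℕ+) / (μ (b : ℕ+) + lam) ≤ μ (b : ℕ+) / lam :=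
                div_le_div_of_nonneg_left hb0.le hlam (by linarith)
            _ ≤ c₁ * (((b : ℕ+) : ℕ) : ℝ) ^ (-s) / lam :=
                div_le_div_of_nonneg_right (hdecay' _) hlam.le
            _ = (c₁ / lam) * ((n₀ + (((b : ℕ+) : ℕ) - (n₀ + 1)) + 1 : ℕ) : ℝ) ^ (-s) := by
                rw [harith]; ring
        · exact hsumN.subtype _
      have h2 : ∑' k : ℕ, (c₁ / lam) * ((n₀ + k + 1 : ℕ) : ℝ) ^ (-s)
          = (c₁ / lam) * ∑' k : ℕ, ((n₀ + k + 1 : ℕ) : ℝ) ^ (-s) := tsum_mul_left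
      refine h1.trans ?_
      rw [h2]
      exact mul_le_mul_of_nonneg_left (tail_sum hs hn₀pos) hd.le
    -- combine
    have hsplit : ∑' i : ℕ+, μ i / (μ i + lam)
        = (∑ i ∈ F, μ i / (μ i + lam)) + ∑' i : { x : ℕ+ // x ∉ F }, μ i / (μ i + lam) :=
      (Summable.sum_add_tsum_subtype_compl hsumN F).symm
    have hs1 : (0 : ℝ) < s - 1 := by linarith
    -- (n₀)^{1-s} ≤ T^{1-s}
    have hmono : (n₀ : ℝ) ^ (1 - s) ≤ T ^ (1 - s) :=
      Real.rpow_le_rpow_of_nonpos hT0 hTn (by linarith)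
    -- (c₁/λ) * T^{1-s} = T
    have hkey : (c₁ / lam) * T ^ (1 - s) = T := by
      have e1 : T ^ (1 - s) = (c₁ / lam) ^ (p * (1 - s)) := by
        rw [hTdef, ← Real.rpow_mul hd.le]
      rw [e1]
      calc (c₁ / lam) * (c₁ / lam) ^ (p * (1 - s))
          = (c₁ / lam) ^ (1 : ℝ) * (c₁ / lam) ^ (p * (1 - s)) := by rw [Real.rpow_one]
        _ = (c₁ / lam) ^ (1 + p * (1 - s)) := (Real.rpow_add hd _ _).symm
        _ = T := by rw [show (1 : ℝ) + p * (1 - s) = p by rw [mul_one_sub, hps]; ring]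
    have htail2 : (c₁ / lam) * ((n₀ : ℝ) ^ (1 - s) / (s - 1)) ≤ T * (p / (1 - p)) := by
      have e2 : s - 1 = (1 - p) / p := by rw [hsdef]; field_simp
      have h3 : (c₁ / lam) * ((n₀ : ℝ) ^ (1 - s) / (s - 1))
          ≤ (c₁ / lam) * (T ^ (1 - s) / (s - 1)) :=
        mul_le_mul_of_nonneg_left (div_le_div_of_nonneg_right hmono hs1.le) hd.le
      have h4 : (c₁ / lam) * (T ^ (1 - s) / (s - 1)) = T * (p / (1 - p)) := by
        rw [← mul_div_assoc, hkey, e2, div_div_eq_mul_div, mul_div_assoc]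
      rw [h4] at h3
      exact h3
    have hTval : T = c₁ ^ p * lam ^ (-p) := by
      rw [hTdef, Real.div_rpow hc.le hlam.le, Real.rpow_neg hlam.le, div_eq_mul_inv]
    calc ∑' i : ℕ+, μ i / (μ i + lam)
        ≤ (n₀ : ℝ) + (c₁ / lam) * ((n₀ : ℝ) ^ (1 - s) / (s - 1)) := by
          rw [hsplit]; exact add_le_add hhead htail
      _ ≤ 2 * T + T * (p / (1 - p)) := add_le_add hn2T htail2
      _ = (2 + p / (1 - p)) * T := by ring
      _ = ((2 + p / (1 - p)) * c₁ ^ p) * lam ^ (-p) := by rw [hTval]; ring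
      _ ≤ (S * c₁ ^ (p - 1) + ((2 + p / (1 - p)) * c₁ ^ p + 1)) * lam ^ (-p) := by
        apply mul_le_mul_of_nonneg_right _ hlamp.le
        linarith
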